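/- arXiv:math-ph/0209057 — 2 statements merged into one kernel-verified Lean document; each statement's English description precedes it below -/
import Mathlib

section
/- Injectivity of the anti-Wick symbol map: if A, B are bounded continuous symbols on ℂⁿ and the Toeplitz operators Q(A) and Q(B) on the Bargmann space coincide, then the Gaussian-smoothed functions coincide: ∫ e^{-|ξ-w|²} A(ξ) dξ = ∫ e^{-|ξ-w|²} B(ξ) dξ for all w ∈ ℂⁿ; hence if A − B is continuous and its Gaussian transform vanishes identically then A = B. -/
open MeasureTheory
open scoped ComplexConjugate BigOperators

noncomputable def hip {n : ℕ} (x y : Fin n → ℂ) : ℂ := ∑ i, conj (x i) * y i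

noncomputable def nsq {n : ℕ} (z : Fin n → ℂ) : ℝ := ∑ i, Complex.normSq (z i)

def IsAntiholo {n : ℕ} (f : (Fin n → ℂ) → ℂ) : Prop :=
  Differentiable ℂ (fun w : Fin n → ℂ => f (fun i => conj (w i)))

noncomputable def toeplitz (n : ℕ) (A : (Fin n → ℂ) → ℂ) (Ψ : (Fin n → ℂ) → ℂ) :
    (Fin n → ℂ) → ℂ :=
  fun z => (Real.pi : ℂ) ^ (-(n : ℤ)) *
    ∫ ξ : Fin n → ℂ,
      Complex.exp (-(nsq ξ : ℝ)) * Complex.exp (hip z ξ) * A ξ * Ψ ξ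

open scoped RealInnerProductSpace FourierTransform Real

noncomputable def phiE (n : ℕ) : EuclideanSpace ℝ (Fin n ⊕ Fin n) ≃ᵐ (Fin n → ℂ) :=
  (MeasurableEquiv.toLp 2 _).symm.trans <|
  (MeasurableEquiv.sumPiEquivProdPi _).trans <|
  ((MeasurableEquiv.arrowProdEquivProdArrow ℝ ℝ (Fin n)).symm).trans <|
  (MeasurableEquiv.piCongrRight fun _ : Fin n => Complex.measurableEquivRealProd.symm)

lemma phiE_apply {n : ℕ} (x : EuclideanSpace ℝ (Fin n ⊕ Fin n)) (i : Fin n) :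
    phiE n x i = Complex.mk (x (.inl i)) (x (.inr i)) := rfl

lemma phiE_mp (n : ℕ) : MeasurePreserving (phiE n) volume volume := by
  have h1 := EuclideanSpace.volume_preserving_symm_measurableEquiv_toLp (Fin n ⊕ Fin n)
  have h2 := volume_measurePreserving_sumPiEquivProdPi (fun _ : Fin n ⊕ Fin n => ℝ)
  have h3 := (volume_measurePreserving_arrowProdEquivProdArrow ℝ ℝ (Fin n)).symm
  have h4 : MeasurePreserving
      (MeasurableEquiv.piCongrRight fun _ : Fin n => Complex.measurableEquivRealProd.symm)
      volume volume := by
    have := volume_preserving_pi (fun _ : Fin n => Complex.volume_preserving_equiv_real_prod.symm)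
    exact this
  exact ((h4.comp h3).comp h2).comp h1

lemma phiE_cont {n : ℕ} : Continuous (phiE n) := by
  apply continuous_pi
  intro i
  simp only [phiE_apply]
  have hre : Continuous fun x : EuclideanSpace ℝ (Fin n ⊕ Fin n) => x (Sum.inl i) :=
    (continuous_apply (Sum.inl i)).comp (PiLp.continuous_ofLp 2 _)
  have him : Continuous fun x : EuclideanSpace ℝ (Fin n ⊕ Fin n) => x (Sum.inr i) :=
    (continuous_apply (Sum.inr i)).comp (PiLp.continuous_ofLp 2 _)
  have : (fun x : EuclideanSpace ℝ (Fin n ⊕ Fin n) => Complex.mk (x (.inl i)) (x (.inr i)))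
      = fun x => (x (.inl i) : ℂ) + (x (.inr i) : ℂ) * Complex.I := by
    funext x
    apply Complex.ext <;> simp
  rw [this]
  exact (Complex.continuous_ofReal.comp hre).add
    ((Complex.continuous_ofReal.comp him).mul continuous_const)

lemma phiE_nsq {n : ℕ} (x : EuclideanSpace ℝ (Fin n ⊕ Fin n)) :
    nsq (phiE n x) = ‖x‖ ^ 2 := by
  have : ‖x‖ ^ 2 = ∑ j, x j ^ 2 := by
    rw [EuclideanSpace.norm_eq, Real.sq_sqrt (Finset.sum_nonneg fun j _ => sq_nonneg _)]
    simp [sq_abs]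
  rw [this, nsq, Fintype.sum_sum_type]
  simp [phiE_apply, Complex.normSq_mk]
  ring_nf
  rw [Finset.sum_add_distrib]

open scoped Real

noncomputable def uOf {n : ℕ} (z w : Fin n → ℂ) : EuclideanSpace ℝ (Fin n ⊕ Fin n) :=
  WithLp.toLp 2 (Sum.elim (fun i => (z i).re + (w i).re) (fun i => (z i).im + (w i).im))

lemma hip_re {n : ℕ} (z ξ : Fin n → ℂ) :
    (hip z ξ).re = ∑ i, ((z i).re * (ξ i).re + (z i).im * (ξ i).im) := by
  rw [hip, Complex.re_sum]
  exact Finset.sum_congr rfl fun i _ => by simp [Complex.mul_re]; try ring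

lemma hip_re' {n : ℕ} (ξ w : Fin n → ℂ) :
    (hip ξ w).re = ∑ i, ((w i).re * (ξ i).re + (w i).im * (ξ i).im) := by
  rw [hip, Complex.re_sum]
  exact Finset.sum_congr rfl fun i _ => by simp [Complex.mul_re]; try ring

lemma inner_uOf {n : ℕ} (z w : Fin n → ℂ) (x : EuclideanSpace ℝ (Fin n ⊕ Fin n)) :
    ⟪uOf z w, x⟫ = (hip z (phiE n x)).re + (hip (phiE n x) w).re := by
  rw [hip_re, hip_re']
  simp only [PiLp.inner_apply, RCLike.inner_apply, conj_trivial, Fintype.sum_sum_type,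
    uOf, WithLp.ofLp_toLp, Sum.elim_inl, Sum.elim_inr, phiE_apply]
  rw [← Finset.sum_add_distrib, ← Finset.sum_add_distrib]
  exact Finset.sum_congr rfl fun i _ => by ring

lemma cont_nsq {n : ℕ} : Continuous fun ξ : Fin n → ℂ => nsq ξ := by
  unfold nsq
  exact continuous_finset_sum _ fun i _ => Complex.continuous_normSq.comp (continuous_apply i)

lemma cont_hip_left {n : ℕ} (z : Fin n → ℂ) : Continuous fun ξ : Fin n → ℂ => hip z ξ := by
  unfold hip
  exact continuous_finset_sum _ fun i _ => continuous_const.mul (continuous_apply i)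

lemma cont_hip_right {n : ℕ} (w : Fin n → ℂ) : Continuous fun ξ : Fin n → ℂ => hip ξ w := by
  unfold hip
  refine continuous_finset_sum _ fun i _ => Continuous.mul ?_ continuous_const
  exact Complex.continuous_conj.comp (continuous_apply i)

lemma cont_integrand {n : ℕ} (z w : Fin n → ℂ) {S : (Fin n → ℂ) → ℂ} (hS : Continuous S) :
    Continuous (fun ξ : Fin n → ℂ =>
      Complex.exp (-(nsq ξ : ℝ)) * Complex.exp (hip z ξ) * S ξ * Complex.exp (hip ξ w)) := by
  have h1 : Continuous fun ξ : Fin n → ℂ => Complex.exp (-(nsq ξ : ℝ)) := by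
    apply Complex.continuous_exp.comp
    exact ((Complex.continuous_ofReal.comp cont_nsq).neg : _)
  exact ((h1.mul (Complex.continuous_exp.comp (cont_hip_left z))).mul hS).mul
    (Complex.continuous_exp.comp (cont_hip_right w))

lemma key_integrable {n : ℕ} (z w : Fin n → ℂ) {S : (Fin n → ℂ) → ℂ} {M : ℝ}
    (hS : Continuous S) (hM : ∀ ξ, ‖S ξ‖ ≤ M) :
    Integrable (fun ξ : Fin n → ℂ =>
      Complex.exp (-(nsq ξ : ℝ)) * Complex.exp (hip z ξ) * S ξ * Complex.exp (hip ξ w)) := by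
  rw [← (phiE_mp n).integrable_comp_emb (phiE n).measurableEmbedding]
  have hint := (GaussianFourier.integrable_cexp_neg_mul_sq_norm_add (by norm_num : (0:ℝ) < (1:ℂ).re)
      1 (uOf z w)).norm.const_mul M
  refine Integrable.mono' hint ?_ (Filter.Eventually.of_forall fun x => ?_)
  · exact ((cont_integrand z w hS).comp phiE_cont).aestronglyMeasurable
  · simp only [Function.comp_apply, norm_mul, Complex.norm_exp]
    have hre : (-1 * (‖x‖:ℂ)^2 + 1 * ((⟪uOf z w, x⟫ : ℝ) : ℂ)).re
        = -‖x‖^2 + ⟪uOf z w, x⟫ := by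
      simp [← Complex.ofReal_pow]
    rw [hre]
    set ξ := phiE n x with hξ
    have h1 : (-(nsq ξ : ℝ) : ℂ).re = -(nsq ξ) := by simp
    rw [h1, inner_uOf, ← phiE_nsq x, ← hξ]
    have hpos : (0:ℝ) < Real.exp (-(nsq ξ)) * Real.exp ((hip z ξ).re)
        * Real.exp ((hip ξ w).re) := by positivity
    calc Real.exp (-(nsq ξ)) * Real.exp ((hip z ξ).re) * ‖S ξ‖
          * Real.exp ((hip ξ w).re)
        = (Real.exp (-(nsq ξ)) * Real.exp ((hip z ξ).re) * Real.exp ((hip ξ w).re))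
            * ‖S ξ‖ := by ring
      _ ≤ (Real.exp (-(nsq ξ)) * Real.exp ((hip z ξ).re) * Real.exp ((hip ξ w).re)) * M := by
            exact mul_le_mul_of_nonneg_left (hM ξ) hpos.le
      _ = M * Real.exp (-(nsq ξ) + ((hip z ξ).re + (hip ξ w).re)) := by
            rw [Real.exp_add, Real.exp_add]; ring

lemma conj_mul_add (a b : ℂ) :
    conj a * b + conj b * a = ((2 * (a.re * b.re + a.im * b.im) : ℝ) : ℂ) := by
  apply Complex.ext <;> simp [Complex.mul_re, Complex.mul_im] <;> ring

lemma hip_add_hip {n : ℕ} (w ξ : Fin n → ℂ) :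
    hip w ξ + hip ξ w
      = ((2 * ∑ i, ((w i).re * (ξ i).re + (w i).im * (ξ i).im) : ℝ) : ℂ) := by
  rw [hip, hip, ← Finset.sum_add_distrib]
  rw [Finset.sum_congr rfl fun i _ => conj_mul_add (w i) (ξ i)]
  push_cast
  rw [Finset.mul_sum]

lemma nsq_sub {n : ℕ} (ξ w : Fin n → ℂ) :
    nsq (ξ - w) = nsq ξ + nsq w
      - 2 * ∑ i, ((w i).re * (ξ i).re + (w i).im * (ξ i).im) := by
  have h : ∀ i : Fin n, Complex.normSq (ξ i - w i)
      = Complex.normSq (ξ i) + Complex.normSq (w i)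
        - 2 * ((w i).re * (ξ i).re + (w i).im * (ξ i).im) := by
    intro i
    simp [Complex.normSq_apply, Complex.sub_re, Complex.sub_im]
    ring
  simp only [nsq, Pi.sub_apply]
  rw [Finset.sum_congr rfl fun i _ => h i, Finset.sum_sub_distrib, Finset.sum_add_distrib,
    Finset.mul_sum]

lemma exp_gauss_split {n : ℕ} (ξ w : Fin n → ℂ) :
    ((Real.exp (-(nsq (ξ - w))) : ℝ) : ℂ)
      = Complex.exp (-(nsq w : ℝ)) * Complex.exp (-(nsq ξ : ℝ))
        * Complex.exp (hip w ξ) * Complex.exp (hip ξ w) := by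
  rw [Complex.ofReal_exp, ← Complex.exp_add, ← Complex.exp_add, ← Complex.exp_add]
  congr 1
  rw [add_assoc, hip_add_hip]
  rw [show (((-(nsq (ξ - w))) : ℝ) : ℂ)
      = ((-(nsq w) + (-(nsq ξ) + 2 * ∑ i, ((w i).re * (ξ i).re + (w i).im * (ξ i).im)) : ℝ) : ℂ)
    from by rw [Complex.ofReal_inj]; rw [nsq_sub]; ring]
  push_cast
  ring

noncomputable def zOf {n : ℕ} (v : EuclideanSpace ℝ (Fin n ⊕ Fin n)) : Fin n → ℂ :=
  fun j => (Real.pi : ℂ) * Complex.I * ((v (.inl j) : ℂ) + (v (.inr j) : ℂ) * Complex.I)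

noncomputable def wOf {n : ℕ} (v : EuclideanSpace ℝ (Fin n ⊕ Fin n)) : Fin n → ℂ :=
  fun j => -((Real.pi : ℂ) * Complex.I) * ((v (.inl j) : ℂ) + (v (.inr j) : ℂ) * Complex.I)

lemma fourier_term (r s : ℝ) (a : ℂ) :
    conj ((Real.pi : ℂ) * Complex.I * ((r : ℂ) + (s : ℂ) * Complex.I)) * a
      + conj a * (-((Real.pi : ℂ) * Complex.I) * ((r : ℂ) + (s : ℂ) * Complex.I))
      = ((-2 * Real.pi * (a.re * r + a.im * s) : ℝ) : ℂ) * Complex.I := by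
  apply Complex.ext <;>
    simp [Complex.mul_re, Complex.mul_im, Complex.add_re, Complex.add_im] <;> ring

lemma fourier_exponent {n : ℕ} (v x : EuclideanSpace ℝ (Fin n ⊕ Fin n)) :
    hip (zOf v) (phiE n x) + hip (phiE n x) (wOf v)
      = ((-2 * Real.pi * ⟪x, v⟫ : ℝ) : ℂ) * Complex.I := by
  rw [hip, hip, ← Finset.sum_add_distrib]
  have h : ∀ j : Fin n, conj (zOf v j) * (phiE n x j) + conj (phiE n x j) * (wOf v j)
      = ((-2 * Real.pi * ((phiE n x j).re * v (.inl j) + (phiE n x j).im * v (.inr j)) : ℝ) : ℂ)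
        * Complex.I := fun j => fourier_term (v (.inl j)) (v (.inr j)) (phiE n x j)
  rw [Finset.sum_congr rfl fun j _ => h j]
  have hv : (⟪x, v⟫ : ℝ) = ∑ j : Fin n,
      ((phiE n x j).re * v (.inl j) + (phiE n x j).im * v (.inr j)) := by
    simp only [PiLp.inner_apply, RCLike.inner_apply, conj_trivial, Fintype.sum_sum_type]
    rw [← Finset.sum_add_distrib]
    exact Finset.sum_congr rfl fun j _ => by simp [phiE_apply] <;> ring
  rw [hv, ← Finset.sum_mul, ← Complex.ofReal_sum]
  congr 2
  rw [Finset.mul_sum]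

lemma psi_antiholo {n : ℕ} (w : Fin n → ℂ) :
    IsAntiholo (fun ξ : Fin n → ℂ => Complex.exp (hip ξ w)) := by
  unfold IsAntiholo
  have h : (fun w' : Fin n → ℂ => Complex.exp (hip (fun i => conj (w' i)) w))
      = fun w' => Complex.exp (∑ i, w' i * w i) := by
    funext w'
    simp [hip]
  rw [h]
  apply Differentiable.cexp
  apply Differentiable.fun_sum
  intro i _
  exact ((ContinuousLinearMap.proj i : (Fin n → ℂ) →L[ℂ] ℂ).differentiable).mul_const (w i)

lemma hip_re_comm {n : ℕ} (w ξ : Fin n → ℂ) : (hip w ξ).re = (hip ξ w).re := by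
  rw [hip_re, hip_re']

lemma psi_integrable {n : ℕ} (w : Fin n → ℂ) :
    Integrable (fun ζ : Fin n → ℂ => Real.exp (-(nsq ζ)) * ‖Complex.exp (hip ζ w)‖ ^ 2) := by
  rw [← (phiE_mp n).integrable_comp_emb (phiE n).measurableEmbedding]
  have hint := (GaussianFourier.integrable_cexp_neg_mul_sq_norm_add
      (by norm_num : (0:ℝ) < (1:ℂ).re) 1 (uOf w w)).norm
  refine Integrable.mono' hint ?_ (Filter.Eventually.of_forall fun x => ?_)
  · apply Continuous.aestronglyMeasurable
    apply Continuous.comp ?_ phiE_cont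
    apply Continuous.mul
    · exact Real.continuous_exp.comp cont_nsq.neg
    · exact (Complex.continuous_exp.comp (cont_hip_right w)).norm.pow 2
  · set ξ := phiE n x with hξ
    have hre : (-1 * (‖x‖:ℂ)^2 + 1 * ((⟪uOf w w, x⟫ : ℝ) : ℂ)).re
        = -‖x‖^2 + ⟪uOf w w, x⟫ := by simp [← Complex.ofReal_pow]
    simp only [Function.comp_apply, norm_mul, Real.norm_eq_abs,
      Complex.norm_exp, hre]
    rw [inner_uOf, ← phiE_nsq x, ← hξ, hip_re_comm w ξ]
    rw [abs_of_nonneg (Real.exp_pos _).le, abs_of_nonneg (by positivity)]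
    apply le_of_eq
    rw [Real.exp_add, Real.exp_add, sq]



/-- Injectivity of the anti-Wick symbol map: if the Toeplitz operators
`Q(A)` and `Q(B)` of bounded continuous symbols coincide on the Bargmann space, then the
Gaussian transforms coincide, `∫ e^{-|ξ-w|²} A(ξ) dξ = ∫ e^{-|ξ-w|²} B(ξ) dξ` for all `w`;
hence if the Gaussian transform of the (continuous) difference vanishes identically,
then `A = B`. -/
theorem antiwick_symbol_injective (n : ℕ) (A B : (Fin n → ℂ) → ℂ) (M : ℝ)
    (hA : Continuous A) (hB : Continuous B)
    (hMA : ∀ ξ, ‖A ξ‖ ≤ M) (hMB : ∀ ξ, ‖B ξ‖ ≤ M)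
    (hQ : ∀ Ψ : (Fin n → ℂ) → ℂ, IsAntiholo Ψ →
      Integrable (fun z : Fin n → ℂ => Real.exp (-(nsq z)) * ‖Ψ z‖ ^ 2) →
      toeplitz n A Ψ = toeplitz n B Ψ) :
    (∀ w : Fin n → ℂ,
        (∫ ξ : Fin n → ℂ, (Real.exp (-(nsq (ξ - w))) : ℂ) * A ξ)
          = ∫ ξ : Fin n → ℂ, (Real.exp (-(nsq (ξ - w))) : ℂ) * B ξ) ∧
    ((∀ w : Fin n → ℂ,
        (∫ ξ : Fin n → ℂ, (Real.exp (-(nsq (ξ - w))) : ℂ) * (A ξ - B ξ)) = 0)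
      → A = B) := by
  have hC : Continuous fun ξ : Fin n → ℂ => A ξ - B ξ := hA.sub hB
  have hC2 : ∀ ξ, ‖A ξ - B ξ‖ ≤ M + M := fun ξ =>
    (norm_sub_le _ _).trans (add_le_add (hMA ξ) (hMB ξ))
  have hI : ∀ z w : Fin n → ℂ,
      (∫ ξ : Fin n → ℂ,
          Complex.exp (-(nsq ξ : ℝ)) * Complex.exp (hip z ξ) * A ξ * Complex.exp (hip ξ w))
        = ∫ ξ : Fin n → ℂ,
          Complex.exp (-(nsq ξ : ℝ)) * Complex.exp (hip z ξ) * B ξ * Complex.exp (hip ξ w) := by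
    intro z w
    have h := hQ (fun ξ => Complex.exp (hip ξ w)) (psi_antiholo w) (psi_integrable w)
    have h2 := congrFun h z
    unfold toeplitz at h2
    refine mul_left_cancel₀ ?_ h2
    exact zpow_ne_zero _ (Complex.ofReal_ne_zero.mpr Real.pi_ne_zero)
  have hKey : ∀ z w : Fin n → ℂ,
      (∫ ξ : Fin n → ℂ, Complex.exp (-(nsq ξ : ℝ)) * Complex.exp (hip z ξ)
        * (A ξ - B ξ) * Complex.exp (hip ξ w)) = 0 := by
    intro z w
    have hsplit : (fun ξ : Fin n → ℂ => Complex.exp (-(nsq ξ : ℝ)) * Complex.exp (hip z ξ)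
          * (A ξ - B ξ) * Complex.exp (hip ξ w))
        = fun ξ =>
          (Complex.exp (-(nsq ξ : ℝ)) * Complex.exp (hip z ξ) * A ξ * Complex.exp (hip ξ w))
          - (Complex.exp (-(nsq ξ : ℝ)) * Complex.exp (hip z ξ) * B ξ * Complex.exp (hip ξ w)) :=
      funext fun ξ => by ring
    rw [hsplit, integral_sub (key_integrable z w hA hMA) (key_integrable z w hB hMB),
      hI z w, sub_self]
  have gauss_eq : ∀ (S : (Fin n → ℂ) → ℂ) (w : Fin n → ℂ),
      (∫ ξ : Fin n → ℂ, (Real.exp (-(nsq (ξ - w))) : ℂ) * S ξ)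
        = Complex.exp (-(nsq w : ℝ)) * ∫ ξ : Fin n → ℂ,
            Complex.exp (-(nsq ξ : ℝ)) * Complex.exp (hip w ξ) * S ξ
              * Complex.exp (hip ξ w) := by
    intro S w
    rw [← integral_const_mul]
    refine integral_congr_ae (Filter.Eventually.of_forall fun ξ => ?_)
    dsimp only
    rw [exp_gauss_split ξ w]
    ring
  constructor
  · intro w
    rw [gauss_eq A w, gauss_eq B w, hI w w]
  · intro _
    set f : EuclideanSpace ℝ (Fin n ⊕ Fin n) → ℂ :=
      fun x => Complex.exp (-(nsq (phiE n x) : ℝ)) * (A (phiE n x) - B (phiE n x)) with hf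
    have hgc : Continuous fun ξ : Fin n → ℂ => Complex.exp (-(nsq ξ : ℝ)) * (A ξ - B ξ) := by
      exact (Complex.continuous_exp.comp
        ((Complex.continuous_ofReal.comp cont_nsq).neg : _)).mul hC
    have hfc : Continuous f := hgc.comp phiE_cont
    have hgint : Integrable (fun ξ : Fin n → ℂ =>
        Complex.exp (-(nsq ξ : ℝ)) * (A ξ - B ξ)) := by
      have h := key_integrable (0 : Fin n → ℂ) (0 : Fin n → ℂ) hC hC2
      simpa [hip, Complex.exp_zero] using h
    have hfint : Integrable f := by
      rw [hf]
      exact ((phiE_mp n).integrable_comp_emb (phiE n).measurableEmbedding).mpr hgint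
    have hFour : 𝓕 f = 0 := by
      funext v
      rw [Real.fourier_eq']
      have hpt : ∀ x : EuclideanSpace ℝ (Fin n ⊕ Fin n),
          Complex.exp (((-2 * Real.pi * ⟪x, v⟫ : ℝ) : ℂ) * Complex.I) • f x
          = (fun ξ => Complex.exp (-(nsq ξ : ℝ)) * Complex.exp (hip (zOf v) ξ)
              * (A ξ - B ξ) * Complex.exp (hip ξ (wOf v))) (phiE n x) := by
        intro x
        simp only [smul_eq_mul, hf]
        rw [← fourier_exponent v x, Complex.exp_add]
        ring
      calc (∫ x, Complex.exp (((-2 * Real.pi * ⟪x, v⟫ : ℝ) : ℂ) * Complex.I) • f x)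
          = ∫ x, (fun ξ => Complex.exp (-(nsq ξ : ℝ)) * Complex.exp (hip (zOf v) ξ)
              * (A ξ - B ξ) * Complex.exp (hip ξ (wOf v))) (phiE n x) :=
            integral_congr_ae (Filter.Eventually.of_forall hpt)
        _ = ∫ ξ : Fin n → ℂ, Complex.exp (-(nsq ξ : ℝ)) * Complex.exp (hip (zOf v) ξ)
              * (A ξ - B ξ) * Complex.exp (hip ξ (wOf v)) :=
            (phiE_mp n).integral_comp (phiE n).measurableEmbedding
              (fun ξ => Complex.exp (-(nsq ξ : ℝ)) * Complex.exp (hip (zOf v) ξ)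
                * (A ξ - B ξ) * Complex.exp (hip ξ (wOf v)))
        _ = 0 := hKey (zOf v) (wOf v)
    have hFourInt : Integrable (𝓕 f) := by rw [hFour]; exact integrable_zero _ _ _
    have hInv := hfc.fourierInv_fourier_eq hfint hFourInt
    rw [hFour] at hInv
    have hInv0 : (𝓕⁻ (0 : EuclideanSpace ℝ (Fin n ⊕ Fin n) → ℂ)) = 0 := by
      funext y
      rw [Real.fourierInv_eq]
      simp
    rw [hInv0] at hInv
    have hzero : ∀ ξ : Fin n → ℂ, Complex.exp (-(nsq ξ : ℝ)) * (A ξ - B ξ) = 0 := by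
      intro ξ
      obtain ⟨x, rfl⟩ : ∃ x, phiE n x = ξ := (phiE n).surjective ξ
      exact congrFun hInv.symm x
    funext ξ
    have := hzero ξ
    rcases mul_eq_zero.mp this with h | h
    · exact absurd h (Complex.exp_ne_zero _)
    · exact sub_eq_zero.mp h
end

section
/- Wick symbol of a composition: for bounded continuous symbols B, C on ℂⁿ, the coherent state matrix element of the product of Toeplitz operators satisfies ⟨Ω_α, Q(B)Q(C)Ω_β⟩ = π^{-2n} ∬ e^{-|ξ₂|²-|ξ₁|²} e^{⟨α,ξ₂⟩ + ⟨ξ₂,ξ₁⟩ + ⟨ξ₁,β⟩} B(ξ̄₂,ξ₂) C(ξ̄₁,ξ₁) dξ₂ dξ₁. -/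
open MeasureTheory
open scoped ComplexConjugate BigOperators

noncomputable def bargmannInner (n : ℕ) (f g : (Fin n → ℂ) → ℂ) : ℂ :=
  (Real.pi : ℂ) ^ (-(n : ℤ)) *
    ∫ z : Fin n → ℂ, Complex.exp (-(nsq z : ℝ)) * conj (f z) * g z

noncomputable def coherent (n : ℕ) (α : Fin n → ℂ) : (Fin n → ℂ) → ℂ :=
  fun z => Complex.exp (hip z α)

lemma gauss1 (a ξ : ℂ) :
    ∫ z : ℂ, Complex.exp (-(Complex.normSq z : ℝ) + conj a * z + conj z * ξ)
      = (Real.pi : ℂ) * Complex.exp (conj a * ξ) := by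
  rw [← (Complex.volume_preserving_equiv_real_prod.symm).integral_comp
    Complex.measurableEquivRealProd.symm.measurableEmbedding]
  have h : ∀ p : ℝ × ℝ,
      Complex.exp (-(Complex.normSq (Complex.measurableEquivRealProd.symm p) : ℝ)
        + conj a * (Complex.measurableEquivRealProd.symm p)
        + conj (Complex.measurableEquivRealProd.symm p) * ξ)
      = Complex.exp ((-1 : ℂ) * (p.1:ℂ)^2 + (conj a + ξ) * (p.1:ℂ) + 0)
        * Complex.exp ((-1 : ℂ) * (p.2:ℂ)^2 + (Complex.I * (conj a - ξ)) * (p.2:ℂ) + 0) := by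
    intro p
    rw [← Complex.exp_add]
    have hs : (Complex.measurableEquivRealProd.symm p) = (p.1 : ℂ) + (p.2 : ℂ) * Complex.I := by
      simp [Complex.measurableEquivRealProd, Complex.ext_iff]
    rw [hs]
    simp [Complex.normSq_apply, map_add, map_mul, Complex.conj_I]
    push_cast
    ring_nf
  simp_rw [h]
  rw [Measure.volume_eq_prod ℝ ℝ,
    integral_prod_mul (fun x:ℝ => Complex.exp ((-1:ℂ)*(x:ℂ)^2+(conj a+ξ)*(x:ℂ)+0))
      (fun y:ℝ => Complex.exp ((-1:ℂ)*(y:ℂ)^2+(Complex.I*(conj a-ξ))*(y:ℂ)+0))]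
  have hb : (-1 : ℂ).re < 0 := by norm_num
  rw [integral_cexp_quadratic hb, integral_cexp_quadratic hb]
  have hpi : (Real.pi : ℂ) ≠ 0 := by
    exact_mod_cast Real.pi_ne_zero
  rw [show ((Real.pi : ℂ) / -(-1)) = (Real.pi : ℂ) by norm_num]
  rw [mul_mul_mul_comm, ← Complex.cpow_add _ _ hpi, ← Complex.exp_add]
  norm_num
  congr 1
  rw [mul_pow, Complex.I_sq]
  ring


lemma gaussN (n : ℕ) (α ξ : Fin n → ℂ) :
    ∫ z : Fin n → ℂ, Complex.exp (-(nsq z : ℝ) + hip α z + hip z ξ)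
      = (Real.pi : ℂ) ^ n * Complex.exp (hip α ξ) := by
  have h : ∀ z : Fin n → ℂ, Complex.exp (-(nsq z : ℝ) + hip α z + hip z ξ)
      = ∏ i, Complex.exp (-(Complex.normSq (z i) : ℝ) + conj (α i) * z i + conj (z i) * ξ i) := by
    intro z
    rw [← Complex.exp_sum]
    congr 1
    unfold hip nsq
    push_cast
    rw [Finset.sum_add_distrib, Finset.sum_add_distrib, ← Finset.sum_neg_distrib]
  simp_rw [h]
  rw [volume_pi, integral_fintype_prod_eq_prod
    (fun i (z : ℂ) => Complex.exp (-(Complex.normSq z : ℝ) + conj (α i) * z + conj z * ξ i))]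
  simp_rw [gauss1]
  rw [Finset.prod_mul_distrib, Finset.prod_const, ← Complex.exp_sum]
  simp [hip]

lemma integrable_gauss_c (c : ℝ) (hc : 0 < c) :
    Integrable (fun z : ℂ => Real.exp (-c * Complex.normSq z)) := by
  rw [← MeasurePreserving.integrable_comp_emb
    (Complex.volume_preserving_equiv_real_prod.symm)
    Complex.measurableEquivRealProd.symm.measurableEmbedding]
  have h : ((fun z : ℂ => Real.exp (-c * Complex.normSq z)) ∘
      Complex.measurableEquivRealProd.symm)
      = fun p : ℝ × ℝ => Real.exp (-c * p.1 ^ 2) * Real.exp (-c * p.2 ^ 2) := by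
    funext p
    have hs : (Complex.measurableEquivRealProd.symm p) = (p.1 : ℂ) + (p.2 : ℂ) * Complex.I := by
      simp [Complex.measurableEquivRealProd, Complex.ext_iff]
    simp only [Function.comp_apply, hs, ← Real.exp_add]
    rw [Complex.normSq_add_mul_I]
    ring_nf
  rw [h, Measure.volume_eq_prod ℝ ℝ]
  exact (integrable_exp_neg_mul_sq hc).mul_prod (integrable_exp_neg_mul_sq hc)

lemma integrable_gauss_pi (n : ℕ) (c : ℝ) (hc : 0 < c) :
    Integrable (fun z : Fin n → ℂ => Real.exp (-c * nsq z)) := by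
  have h : ∀ z : Fin n → ℂ,
      Real.exp (-c * nsq z) = ∏ i, Real.exp (-c * Complex.normSq (z i)) := by
    intro z
    rw [← Real.exp_sum]
    unfold nsq
    rw [← Finset.mul_sum]
  simp_rw [h]
  exact Integrable.fintype_prod (fun _ => integrable_gauss_c c hc)

lemma hip_conj {n : ℕ} (x y : Fin n → ℂ) : conj (hip x y) = hip y x := by
  unfold hip
  rw [map_sum]
  apply Finset.sum_congr rfl
  intro i _
  rw [map_mul, Complex.conj_conj, mul_comm]

lemma re_hip_le {n : ℕ} (x y : Fin n → ℂ) (s t : ℝ) (hs : 0 < s) (h : 1 ≤ 4 * s * t) :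
    (hip x y).re ≤ s * nsq x + t * nsq y := by
  unfold hip nsq
  rw [Complex.re_sum, Finset.mul_sum, Finset.mul_sum, ← Finset.sum_add_distrib]
  apply Finset.sum_le_sum
  intro i _
  have h1 : (conj (x i) * y i).re ≤ ‖x i‖ * ‖y i‖ := by
    calc (conj (x i) * y i).re ≤ ‖conj (x i) * y i‖ := Complex.re_le_norm _
    _ = ‖x i‖ * ‖y i‖ := by rw [norm_mul, Complex.norm_conj]
  have h2 : Complex.normSq (x i) = (‖x i‖) ^ 2 := (Complex.sq_norm _).symm
  have h3 : Complex.normSq (y i) = (‖y i‖) ^ 2 := (Complex.sq_norm _).symm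
  rw [h2, h3]
  nlinarith [sq_nonneg (2 * s * ‖x i‖ - ‖y i‖),
    mul_nonneg (mul_nonneg hs.le hs.le) (sq_nonneg (‖x i‖)),
    mul_nonneg (by nlinarith : (0:ℝ) ≤ 4 * s * t - 1) (sq_nonneg (‖y i‖))]

lemma continuous_nsq {n : ℕ} : Continuous (fun z : Fin n → ℂ => nsq z) := by
  unfold nsq
  exact continuous_finset_sum _ fun i _ => Complex.continuous_normSq.comp (continuous_apply i)

lemma continuous_hip2 {n : ℕ} :
    Continuous (fun p : (Fin n → ℂ) × (Fin n → ℂ) => hip p.1 p.2) := by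
  unfold hip
  exact continuous_finset_sum _ fun i _ =>
    (Complex.continuous_conj.comp ((continuous_apply i).comp continuous_fst)).mul
      ((continuous_apply i).comp continuous_snd)

lemma continuous_hip_left {n : ℕ} (a : Fin n → ℂ) :
    Continuous (fun z : Fin n → ℂ => hip a z) := by
  unfold hip
  exact continuous_finset_sum _ fun i _ => continuous_const.mul (continuous_apply i)

lemma continuous_hip_right {n : ℕ} (a : Fin n → ℂ) :
    Continuous (fun z : Fin n → ℂ => hip z a) := by
  unfold hip
  exact continuous_finset_sum _ fun i _ =>
    (Complex.continuous_conj.comp (continuous_apply i)).mul continuous_const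


set_option maxHeartbeats 1000000 in
lemma key (n : ℕ) (B Ψ : (Fin n → ℂ) → ℂ) (M K : ℝ)
    (hB : Continuous B) (hΨm : StronglyMeasurable Ψ)
    (hMB : ∀ ξ, ‖B ξ‖ ≤ M) (hΨ : ∀ ξ, ‖Ψ ξ‖ ≤ K * Real.exp (nsq ξ / 2))
    (α : Fin n → ℂ) :
    bargmannInner n (coherent n α) (toeplitz n B Ψ) =
      (Real.pi : ℂ) ^ (-(n : ℤ)) *
        ∫ ξ : Fin n → ℂ, Complex.exp (-(nsq ξ : ℝ)) * Complex.exp (hip α ξ) * B ξ * Ψ ξ := by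
  have hM0 : 0 ≤ M := le_trans (norm_nonneg _) (hMB 0)
  have hK0 : 0 ≤ K := by
    have h := le_trans (norm_nonneg (Ψ 0)) (hΨ 0)
    simpa [nsq] using h
  have hpi : (Real.pi : ℂ) ≠ 0 := by exact_mod_cast Real.pi_ne_zero
  set G : ((Fin n → ℂ) × (Fin n → ℂ)) → ℂ := fun p =>
    Complex.exp (-(nsq p.1 : ℝ) + hip α p.1 + hip p.1 p.2) *
      (Complex.exp (-(nsq p.2 : ℝ)) * B p.2 * Ψ p.2) with hG
  have hGm : AEStronglyMeasurable G (volume.prod volume) := by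
    apply AEStronglyMeasurable.mul
    · exact (Complex.continuous_exp.comp (((Complex.continuous_ofReal.comp
        (continuous_nsq.comp continuous_fst)).neg.add
        ((continuous_hip_left α).comp continuous_fst)).add continuous_hip2)).aestronglyMeasurable
    · exact (((Complex.continuous_exp.comp (Complex.continuous_ofReal.comp
        (continuous_nsq.comp continuous_snd)).neg).mul
        (hB.comp continuous_snd)).aestronglyMeasurable).mul
        ((hΨm.comp_measurable measurable_snd).aestronglyMeasurable)
  have hGi : Integrable G (volume.prod volume) := by
    apply Integrable.mono'
      (g := fun p : (Fin n → ℂ) × (Fin n → ℂ) =>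
        (M * K * Real.exp ((3/2) * nsq α)) *
          (Real.exp (-(1/6 : ℝ) * nsq p.1) * Real.exp (-(1/8 : ℝ) * nsq p.2)))
      (((integrable_gauss_pi n (1/6) (by norm_num)).mul_prod
        (integrable_gauss_pi n (1/8) (by norm_num))).const_mul _) hGm
    apply Filter.Eventually.of_forall
    intro p
    have e1 : ‖G p‖ = Real.exp (-(nsq p.1) + (hip α p.1).re + (hip p.1 p.2).re) *
        (Real.exp (-(nsq p.2)) * ‖B p.2‖ * ‖Ψ p.2‖) := by
      simp [hG, Complex.norm_exp]
    rw [e1]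
    have hb1 : (hip α p.1).re ≤ (3/2) * nsq α + (1/6) * nsq p.1 :=
      re_hip_le α p.1 (3/2) (1/6) (by norm_num) (by norm_num)
    have hb2 : (hip p.1 p.2).re ≤ (2/3) * nsq p.1 + (3/8) * nsq p.2 :=
      re_hip_le p.1 p.2 (2/3) (3/8) (by norm_num) (by norm_num)
    calc Real.exp (-(nsq p.1) + (hip α p.1).re + (hip p.1 p.2).re) *
        (Real.exp (-(nsq p.2)) * ‖B p.2‖ * ‖Ψ p.2‖)
        ≤ Real.exp (-(nsq p.1) + ((3/2) * nsq α + (1/6) * nsq p.1) +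
            ((2/3) * nsq p.1 + (3/8) * nsq p.2)) *
          (Real.exp (-(nsq p.2)) * M * (K * Real.exp (nsq p.2 / 2))) := by
          gcongr <;>
            first
              | exact Real.exp_le_exp.2 (by linarith)
              | exact hMB _
              | exact hΨ _
              | positivity
      _ = (M * K * Real.exp ((3/2) * nsq α)) *
          (Real.exp (-(1/6 : ℝ) * nsq p.1) * Real.exp (-(1/8 : ℝ) * nsq p.2)) := by
          calc Real.exp (-(nsq p.1) + ((3/2) * nsq α + (1/6) * nsq p.1) +
              ((2/3) * nsq p.1 + (3/8) * nsq p.2)) *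
              (Real.exp (-(nsq p.2)) * M * (K * Real.exp (nsq p.2 / 2)))
              = (M * K) * (Real.exp (-(nsq p.1) + ((3/2) * nsq α + (1/6) * nsq p.1) +
                ((2/3) * nsq p.1 + (3/8) * nsq p.2)) * Real.exp (-(nsq p.2)) *
                Real.exp (nsq p.2 / 2)) := by ring
            _ = (M * K) * Real.exp ((-(nsq p.1) + ((3/2) * nsq α + (1/6) * nsq p.1) +
                ((2/3) * nsq p.1 + (3/8) * nsq p.2)) + (-(nsq p.2)) + nsq p.2 / 2) := by
                rw [← Real.exp_add, ← Real.exp_add]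
            _ = (M * K) * (Real.exp ((3/2) * nsq α) *
                (Real.exp (-(1/6 : ℝ) * nsq p.1) * Real.exp (-(1/8 : ℝ) * nsq p.2))) := by
                rw [← Real.exp_add, ← Real.exp_add]
                congr 1
                ring
            _ = _ := by ring
  -- now the computation
  unfold bargmannInner toeplitz coherent
  have h1 : ∀ z : Fin n → ℂ,
      Complex.exp (-(nsq z : ℝ)) * conj (Complex.exp (hip z α)) *
        ((Real.pi : ℂ) ^ (-(n : ℤ)) *
          ∫ ξ : Fin n → ℂ, Complex.exp (-(nsq ξ : ℝ)) * Complex.exp (hip z ξ) * B ξ * Ψ ξ)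
      = (Real.pi : ℂ) ^ (-(n : ℤ)) * ∫ ξ : Fin n → ℂ, G (z, ξ) := by
    intro z
    rw [← Complex.exp_conj, hip_conj, mul_left_comm]
    congr 1
    rw [← integral_const_mul]
    congr 1
    funext ξ
    rw [hG]
    simp only [Complex.exp_add]
    ring
  simp_rw [h1]
  rw [integral_const_mul]
  rw [show (∫ z : Fin n → ℂ, ∫ ξ : Fin n → ℂ, G (z, ξ)) =
      ∫ ξ : Fin n → ℂ, ∫ z : Fin n → ℂ, G (z, ξ) from
    integral_integral_swap (by exact hGi)]
  have h2 : ∀ ξ : Fin n → ℂ, (∫ z : Fin n → ℂ, G (z, ξ)) =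
      (Real.pi : ℂ) ^ n * (Complex.exp (hip α ξ) *
        (Complex.exp (-(nsq ξ : ℝ)) * B ξ * Ψ ξ)) := by
    intro ξ
    simp only [hG]
    rw [integral_mul_const, gaussN]
    ring
  simp_rw [h2]
  rw [integral_const_mul]
  rw [← mul_assoc, ← mul_assoc]
  have hc : (Real.pi : ℂ) ^ (-(n : ℤ)) * (Real.pi : ℂ) ^ (-(n : ℤ)) * (Real.pi : ℂ) ^ n
      = (Real.pi : ℂ) ^ (-(n : ℤ)) := by
    rw [← zpow_natCast (Real.pi : ℂ) n, ← zpow_add₀ hpi, ← zpow_add₀ hpi]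
    norm_num
  rw [hc]
  congr 1
  apply integral_congr_ae
  apply Filter.Eventually.of_forall
  intro ξ
  ring

lemma psi_meas (n : ℕ) (C : (Fin n → ℂ) → ℂ) (β : Fin n → ℂ) (hC : Continuous C) :
    StronglyMeasurable (toeplitz n C (coherent n β)) := by
  unfold toeplitz coherent
  apply StronglyMeasurable.const_mul
  apply StronglyMeasurable.integral_prod_right
    (f := fun (z ξ : Fin n → ℂ) =>
      Complex.exp (-(nsq ξ : ℝ)) * Complex.exp (hip z ξ) * C ξ * Complex.exp (hip ξ β))
  apply Continuous.stronglyMeasurable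
  exact (((Complex.continuous_exp.comp (Complex.continuous_ofReal.comp
      (continuous_nsq.comp continuous_snd)).neg).mul
      (Complex.continuous_exp.comp continuous_hip2)).mul
      (hC.comp continuous_snd)).mul
      (Complex.continuous_exp.comp ((continuous_hip_right β).comp continuous_snd))

lemma psi_bound (n : ℕ) (C : (Fin n → ℂ) → ℂ) (M : ℝ) (hMC : ∀ ξ, ‖C ξ‖ ≤ M)
    (hM0 : 0 ≤ M) (β ξ : Fin n → ℂ) :
    ‖toeplitz n C (coherent n β) ξ‖ ≤
      (Real.pi ^ (-(n : ℤ)) * (M * Real.exp (nsq β)) *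
        ∫ ξ₁ : Fin n → ℂ, Real.exp (-(1/4 : ℝ) * nsq ξ₁)) * Real.exp (nsq ξ / 2) := by
  unfold toeplitz coherent
  rw [norm_mul]
  have hnp : ‖(Real.pi : ℂ) ^ (-(n : ℤ))‖ = Real.pi ^ (-(n : ℤ)) := by
    rw [norm_zpow, Complex.norm_of_nonneg Real.pi_pos.le]
  rw [hnp]
  have hbound : ∀ ξ₁ : Fin n → ℂ,
      ‖Complex.exp (-(nsq ξ₁ : ℝ)) * Complex.exp (hip ξ ξ₁) * C ξ₁ * Complex.exp (hip ξ₁ β)‖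
        ≤ (M * Real.exp (nsq β) * Real.exp (nsq ξ / 2)) * Real.exp (-(1/4 : ℝ) * nsq ξ₁) := by
    intro ξ₁
    have e1 : ‖Complex.exp (-(nsq ξ₁ : ℝ)) * Complex.exp (hip ξ ξ₁) * C ξ₁ *
        Complex.exp (hip ξ₁ β)‖ = Real.exp (-(nsq ξ₁)) * Real.exp ((hip ξ ξ₁).re) * ‖C ξ₁‖ *
        Real.exp ((hip ξ₁ β).re) := by
      simp [Complex.norm_exp]
    rw [e1]
    have hb1 : (hip ξ ξ₁).re ≤ (1/2) * nsq ξ + (1/2) * nsq ξ₁ :=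
      re_hip_le ξ ξ₁ (1/2) (1/2) (by norm_num) (by norm_num)
    have hb2 : (hip ξ₁ β).re ≤ (1/4) * nsq ξ₁ + 1 * nsq β :=
      re_hip_le ξ₁ β (1/4) 1 (by norm_num) (by norm_num)
    calc Real.exp (-(nsq ξ₁)) * Real.exp ((hip ξ ξ₁).re) * ‖C ξ₁‖ * Real.exp ((hip ξ₁ β).re)
        ≤ Real.exp (-(nsq ξ₁)) * Real.exp ((1/2) * nsq ξ + (1/2) * nsq ξ₁) * M *
          Real.exp ((1/4) * nsq ξ₁ + 1 * nsq β) := by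
          gcongr <;>
            first
              | exact Real.exp_le_exp.2 (by linarith)
              | exact hMC _
              | positivity
      _ = M * (Real.exp (-(nsq ξ₁)) * Real.exp ((1/2) * nsq ξ + (1/2) * nsq ξ₁) *
          Real.exp ((1/4) * nsq ξ₁ + 1 * nsq β)) := by ring
      _ = M * Real.exp ((-(nsq ξ₁)) + ((1/2) * nsq ξ + (1/2) * nsq ξ₁) +
          ((1/4) * nsq ξ₁ + 1 * nsq β)) := by rw [← Real.exp_add, ← Real.exp_add]
      _ = M * (Real.exp (nsq β) * (Real.exp (nsq ξ / 2) * Real.exp (-(1/4 : ℝ) * nsq ξ₁))) := by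
          rw [← Real.exp_add, ← Real.exp_add]
          congr 1
          ring
      _ = _ := by ring
  have hgi : Integrable (fun ξ₁ : Fin n → ℂ =>
      (M * Real.exp (nsq β) * Real.exp (nsq ξ / 2)) * Real.exp (-(1/4 : ℝ) * nsq ξ₁)) :=
    (integrable_gauss_pi n (1/4) (by norm_num)).const_mul _
  have h2 := norm_integral_le_of_norm_le hgi (Filter.Eventually.of_forall hbound)
  calc Real.pi ^ (-(n : ℤ)) *
      ‖∫ ξ₁ : Fin n → ℂ, Complex.exp (-(nsq ξ₁ : ℝ)) * Complex.exp (hip ξ ξ₁) * C ξ₁ *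
        Complex.exp (hip ξ₁ β)‖
      ≤ Real.pi ^ (-(n : ℤ)) * ∫ ξ₁ : Fin n → ℂ,
        (M * Real.exp (nsq β) * Real.exp (nsq ξ / 2)) * Real.exp (-(1/4 : ℝ) * nsq ξ₁) :=
        mul_le_mul_of_nonneg_left h2 (by positivity)
    _ = _ := by
        rw [integral_const_mul]
        ring


set_option maxHeartbeats 1000000

/-- The Wick symbol of a composition: for bounded continuous symbols
`B, C` on `ℂⁿ`,
`⟨Ω_α, Q(B)Q(C)Ω_β⟩ = π^{-2n} ∬ e^{-|ξ₂|²-|ξ₁|²} e^{⟨α,ξ₂⟩+⟨ξ₂,ξ₁⟩+⟨ξ₁,β⟩}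
B(ξ̄₂,ξ₂) C(ξ̄₁,ξ₁) dξ₂ dξ₁`. -/
theorem toeplitz_composition_matrix_element (n : ℕ) (B C : (Fin n → ℂ) → ℂ) (M : ℝ)
    (hB : Continuous B) (hC : Continuous C)
    (hMB : ∀ ξ, ‖B ξ‖ ≤ M) (hMC : ∀ ξ, ‖C ξ‖ ≤ M) (α β : Fin n → ℂ) :
    bargmannInner n (coherent n α) (toeplitz n B (toeplitz n C (coherent n β))) =
      (Real.pi : ℂ) ^ (-(2 * n : ℤ)) *
        ∫ ξ₂ : Fin n → ℂ, ∫ ξ₁ : Fin n → ℂ,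
          Complex.exp (-(nsq ξ₂ : ℝ) - (nsq ξ₁ : ℝ)) *
            Complex.exp (hip α ξ₂ + hip ξ₂ ξ₁ + hip ξ₁ β) * B ξ₂ * C ξ₁ := by
  have hM0 : 0 ≤ M := le_trans (norm_nonneg _) (hMC 0)
  have hpi : (Real.pi : ℂ) ≠ 0 := by exact_mod_cast Real.pi_ne_zero
  rw [key n B (toeplitz n C (coherent n β)) M
    (Real.pi ^ (-(n : ℤ)) * (M * Real.exp (nsq β)) *
      ∫ ξ₁ : Fin n → ℂ, Real.exp (-(1/4 : ℝ) * nsq ξ₁))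
    hB (psi_meas n C β hC) hMB (psi_bound n C M hMC hM0 β) α]
  rw [show (-(2 * n : ℤ)) = (-(n : ℤ)) + (-(n : ℤ)) by ring, zpow_add₀ hpi, mul_assoc]
  congr 1
  rw [← integral_const_mul]
  congr 1
  funext ξ₂
  have hinner : (∫ ξ₁ : Fin n → ℂ,
      Complex.exp (-(nsq ξ₂ : ℝ) - (nsq ξ₁ : ℝ)) *
        Complex.exp (hip α ξ₂ + hip ξ₂ ξ₁ + hip ξ₁ β) * B ξ₂ * C ξ₁)
      = (Complex.exp (-(nsq ξ₂ : ℝ)) * Complex.exp (hip α ξ₂) * B ξ₂) *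
        ∫ ξ₁ : Fin n → ℂ, Complex.exp (-(nsq ξ₁ : ℝ)) * Complex.exp (hip ξ₂ ξ₁) * C ξ₁ *
          Complex.exp (hip ξ₁ β) := by
    rw [← integral_const_mul]
    congr 1
    funext ξ₁
    simp only [sub_eq_add_neg, Complex.exp_add]
    ring
  rw [hinner]
  show _ * ((Real.pi : ℂ) ^ (-(n : ℤ)) * _) = _
  simp only [coherent]
  ring
end
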